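/- Let a < b be real, σ ∈ (0,1], let φ be continuously differentiable on an open interval containing [a,b] with φ′ > 0 there, let α > 0, β > 0, and let f : ℝ → ℂ be continuous on [a,b]. Then for every t ∈ [a,b], ({}_aI^{α,σ,φ} ({}_aI^{β,σ,φ} f))(t) = ({}_aI^{α+β,σ,φ} f)(t) (semigroup property of the left proportional fractional integrals with respect to φ). -/

import Mathlib

open MeasureTheory intervalIntegral Set

noncomputable def pk (σ γ : ℝ) (φ φ' : ℝ → ℝ) (x y : ℝ) : ℝ :=
  Real.exp ((σ - 1) / σ * (φ x - φ y)) * (φ x - φ y) ^ (γ - 1) * φ' y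

lemma pk_nonneg {σ γ : ℝ} {φ φ' : ℝ → ℝ} {x y : ℝ} (h1 : 0 ≤ φ x - φ y) (h2 : 0 ≤ φ' y) :
    0 ≤ pk σ γ φ φ' x y :=
  mul_nonneg (mul_nonneg (Real.exp_pos _).le (Real.rpow_nonneg h1 _)) h2

lemma pk_le {σ γ : ℝ} {φ φ' : ℝ → ℝ} {x y : ℝ} (hc : (σ - 1) / σ ≤ 0)
    (h1 : 0 ≤ φ x - φ y) (h2 : 0 ≤ φ' y) :
    pk σ γ φ φ' x y ≤ (φ x - φ y) ^ (γ - 1) * φ' y := by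
  have hexp : Real.exp ((σ - 1) / σ * (φ x - φ y)) ≤ 1 :=
    Real.exp_le_one_iff.mpr (mul_nonpos_iff.mpr (Or.inr ⟨hc, h1⟩))
  rw [pk]
  nlinarith [mul_nonneg (Real.rpow_nonneg h1 (γ - 1)) h2, Real.rpow_nonneg h1 (γ - 1),
    mul_nonneg (Real.rpow_nonneg h1 (γ - 1)) h2, hexp, Real.exp_pos ((σ - 1) / σ * (φ x - φ y))]

lemma pk_mul {σ p q : ℝ} {φ φ' : ℝ → ℝ} {x y z : ℝ} :
    pk σ p φ φ' x y * pk σ q φ φ' y z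
      = (Real.exp ((σ - 1) / σ * (φ x - φ z)) * φ' z)
        * ((φ x - φ y) ^ (p - 1) * (φ y - φ z) ^ (q - 1) * φ' y) := by
  have h : Real.exp ((σ - 1) / σ * (φ x - φ y)) * Real.exp ((σ - 1) / σ * (φ y - φ z))
      = Real.exp ((σ - 1) / σ * (φ x - φ z)) := by
    rw [← Real.exp_add]; congr 1; ring
  rw [pk, pk]
  linear_combination ((φ x - φ y) ^ (p - 1) * φ' y * ((φ y - φ z) ^ (q - 1) * φ' z)) * h

lemma realBetaAux {p q : ℝ} (hp : 0 < p) (hq : 0 < q) {e : ℝ} (he : 0 < e) :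
    ∫ x in (0:ℝ)..e, x ^ (p - 1) * (e - x) ^ (q - 1)
      = e ^ (p + q - 1) * (Real.Gamma p * Real.Gamma q / Real.Gamma (p + q)) := by
  have hbeta : Complex.betaIntegral p q
      = (Real.Gamma p * Real.Gamma q / Real.Gamma (p + q) : ℝ) := by
    have h := Complex.Gamma_mul_Gamma_eq_betaIntegral
      (s := (p:ℂ)) (t := (q:ℂ)) (by simpa using hp) (by simpa using hq)
    rw [show (p:ℂ) + (q:ℂ) = ((p+q : ℝ):ℂ) by push_cast; ring] at h
    rw [Complex.Gamma_ofReal, Complex.Gamma_ofReal, Complex.Gamma_ofReal] at h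
    have hne : ((Real.Gamma (p+q) : ℝ) : ℂ) ≠ 0 := by
      exact_mod_cast (Real.Gamma_pos_of_pos (by linarith : (0:ℝ) < p + q)).ne'
    push_cast
    rw [eq_div_iff hne]
    linear_combination -h
  have hsc := Complex.betaIntegral_scaled (p:ℂ) (q:ℂ) he
  have hcongr : ∫ x in (0:ℝ)..e, ((x ^ (p - 1) * (e - x) ^ (q - 1) : ℝ) : ℂ)
      = ∫ x in (0:ℝ)..e, (x:ℂ) ^ ((p:ℂ) - 1) * ((e:ℂ) - (x:ℂ)) ^ ((q:ℂ) - 1) := by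
    apply intervalIntegral.integral_congr
    intro x hx
    rw [uIcc_of_le he.le] at hx
    have hx0 : (0:ℝ) ≤ x := hx.1
    have hex : (0:ℝ) ≤ e - x := by linarith [hx.2]
    simp only []
    rw [Complex.ofReal_mul, Complex.ofReal_cpow hx0, Complex.ofReal_cpow hex]
    push_cast
    ring
  have key := (intervalIntegral.integral_ofReal
    (f := fun x => x ^ (p - 1) * (e - x) ^ (q - 1)) (a := (0:ℝ)) (b := e)).symm.trans
    (hcongr.trans hsc)
  rw [hbeta] at key
  have hre : ((e:ℂ)) ^ ((p:ℂ) + q - 1) = ((e ^ (p + q - 1) : ℝ) : ℂ) := by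
    rw [Complex.ofReal_cpow he.le]
    push_cast
    ring_nf
  rw [hre, ← Complex.ofReal_mul] at key
  exact_mod_cast key

lemma betaIoo {c d : ℝ} (hcd : c < d) {p q : ℝ} (hp : 0 < p) (hq : 0 < q) :
    ∫ u in Ioo c d, (d - u) ^ (q - 1) * (u - c) ^ (p - 1)
      = (d - c) ^ (p + q - 1) * (Real.Gamma p * Real.Gamma q / Real.Gamma (p + q)) := by
  rw [← integral_Ioc_eq_integral_Ioo, ← intervalIntegral.integral_of_le hcd.le]
  calc ∫ u in c..d, (d - u) ^ (q - 1) * (u - c) ^ (p - 1)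
      = ∫ x in (0:ℝ)..(d-c), (d - (x + c)) ^ (q - 1) * ((x + c) - c) ^ (p - 1) := by
        rw [intervalIntegral.integral_comp_add_right
          (fun u => (d - u) ^ (q - 1) * (u - c) ^ (p - 1)) c]
        norm_num
    _ = ∫ x in (0:ℝ)..(d-c), x ^ (p-1) * ((d - c) - x) ^ (q-1) := by
        congr 1; ext x
        rw [show d - (x + c) = (d - c) - x by ring, show (x + c) - c = x by ring]
        ring
    _ = (d - c) ^ (p + q - 1) * (Real.Gamma p * Real.Gamma q / Real.Gamma (p + q)) :=
        realBetaAux hp hq (by linarith)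

lemma rpowIntegrable {c d : ℝ} {γ : ℝ} (hγ : 0 < γ) :
    IntegrableOn (fun u => (d - u) ^ (γ - 1)) (Ioo c d) volume := by
  have h : IntervalIntegrable (fun x : ℝ => x ^ (γ - 1)) volume (d - c) (d - d) :=
    intervalIntegrable_rpow' (by linarith)
  have h2 : IntervalIntegrable (fun u : ℝ => (d - u) ^ (γ - 1)) volume c d := by
    simpa using h.comp_sub_left d
  exact (h2.def' ).mono_set (by rcases le_or_gt c d with h|h
                                · rw [uIoc_of_le h]; exact Ioo_subset_Ioc_self
                                · simp [Ioo_eq_empty (not_lt.mpr h.le)])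

lemma rpowIooVal {c d : ℝ} (hcd : c < d) {γ : ℝ} (hγ : 0 < γ) :
    ∫ u in Ioo c d, (d - u) ^ (γ - 1) = (d - c) ^ γ / γ := by
  rw [← integral_Ioc_eq_integral_Ioo, ← intervalIntegral.integral_of_le hcd.le]
  rw [intervalIntegral.integral_comp_sub_left (fun x : ℝ => x ^ (γ - 1)) d]
  rw [integral_rpow (Or.inl (by linarith : (-1:ℝ) < γ - 1))]
  rw [sub_self, Real.zero_rpow (by linarith : γ - 1 + 1 ≠ 0)]
  rw [sub_add_cancel]
  ring

lemma covImage {x y : ℝ} {φ : ℝ → ℝ} (hxy : x < y) (hc : ContinuousOn φ (Icc x y))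
    (hmono : StrictMonoOn φ (Icc x y)) : φ '' Ioo x y = Ioo (φ x) (φ y) := by
  apply subset_antisymm
  · rintro _ ⟨τ, hτ, rfl⟩
    exact ⟨hmono (left_mem_Icc.mpr hxy.le) (Ioo_subset_Icc_self hτ) hτ.1,
      hmono (Ioo_subset_Icc_self hτ) (right_mem_Icc.mpr hxy.le) hτ.2⟩
  · exact intermediate_value_Ioo hxy.le hc

lemma covIntegral {F : Type*} [NormedAddCommGroup F] [NormedSpace ℝ F]
    {x y : ℝ} {φ φ' : ℝ → ℝ} (hxy : x < y)
    (hd : ∀ τ ∈ Ioo x y, HasDerivWithinAt φ (φ' τ) (Ioo x y) τ)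
    (hc : ContinuousOn φ (Icc x y)) (hmono : StrictMonoOn φ (Icc x y)) (g : ℝ → F) :
    ∫ u in Ioo (φ x) (φ y), g u = ∫ τ in Ioo x y, |φ' τ| • g (φ τ) := by
  rw [← covImage hxy hc hmono,
    integral_image_eq_integral_abs_deriv_smul measurableSet_Ioo hd
      (hmono.injOn.mono Ioo_subset_Icc_self) g]

lemma covIntegrable {F : Type*} [NormedAddCommGroup F] [NormedSpace ℝ F]
    {x y : ℝ} {φ φ' : ℝ → ℝ} (hxy : x < y)
    (hd : ∀ τ ∈ Ioo x y, HasDerivWithinAt φ (φ' τ) (Ioo x y) τ)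
    (hc : ContinuousOn φ (Icc x y)) (hmono : StrictMonoOn φ (Icc x y)) (g : ℝ → F) :
    IntegrableOn g (Ioo (φ x) (φ y)) volume
      ↔ IntegrableOn (fun τ => |φ' τ| • g (φ τ)) (Ioo x y) volume := by
  rw [← covImage hxy hc hmono]
  exact integrableOn_image_iff_integrableOn_abs_deriv_smul measurableSet_Ioo hd
    (hmono.injOn.mono Ioo_subset_Icc_self) g

lemma key1 {x y γ : ℝ} {φ φ' : ℝ → ℝ} (hxy : x < y) (hγ : 0 < γ)
    (hd : ∀ τ ∈ Ioo x y, HasDerivWithinAt φ (φ' τ) (Ioo x y) τ)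
    (hc : ContinuousOn φ (Icc x y)) (hmono : StrictMonoOn φ (Icc x y))
    (hp : ∀ τ ∈ Ioo x y, 0 < φ' τ) :
    IntegrableOn (fun τ => (φ y - φ τ) ^ (γ - 1) * φ' τ) (Ioo x y) volume ∧
    ∫ τ in Ioo x y, (φ y - φ τ) ^ (γ - 1) * φ' τ = (φ y - φ x) ^ γ / γ := by
  have hφxy : φ x < φ y :=
    hmono (left_mem_Icc.mpr hxy.le) (right_mem_Icc.mpr hxy.le) hxy
  have heq : ∀ τ ∈ Ioo x y,
      |φ' τ| • ((φ y - φ τ) ^ (γ - 1)) = (φ y - φ τ) ^ (γ - 1) * φ' τ := by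
    intro τ hτ
    rw [smul_eq_mul, abs_of_pos (hp τ hτ), mul_comm]
  constructor
  · have := (covIntegrable hxy hd hc hmono (fun u => (φ y - u) ^ (γ - 1))).mp
      (rpowIntegrable hγ)
    exact this.congr_fun heq measurableSet_Ioo
  · rw [← setIntegral_congr_fun measurableSet_Ioo heq,
      ← covIntegral hxy hd hc hmono (fun u => (φ y - u) ^ (γ - 1))]
    exact rpowIooVal hφxy hγ

lemma key2 {x y p q : ℝ} {φ φ' : ℝ → ℝ} (hxy : x < y) (hp : 0 < p) (hq : 0 < q)
    (hd : ∀ τ ∈ Ioo x y, HasDerivWithinAt φ (φ' τ) (Ioo x y) τ)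
    (hc : ContinuousOn φ (Icc x y)) (hmono : StrictMonoOn φ (Icc x y))
    (hps : ∀ τ ∈ Ioo x y, 0 < φ' τ) :
    ∫ τ in Ioo x y, (φ y - φ τ) ^ (q - 1) * (φ τ - φ x) ^ (p - 1) * φ' τ
      = (φ y - φ x) ^ (p + q - 1) * (Real.Gamma p * Real.Gamma q / Real.Gamma (p + q)) := by
  have hφxy : φ x < φ y :=
    hmono (left_mem_Icc.mpr hxy.le) (right_mem_Icc.mpr hxy.le) hxy
  have heq : ∀ τ ∈ Ioo x y,
      |φ' τ| • ((φ y - φ τ) ^ (q - 1) * (φ τ - φ x) ^ (p - 1))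
        = (φ y - φ τ) ^ (q - 1) * (φ τ - φ x) ^ (p - 1) * φ' τ := by
    intro τ hτ
    rw [smul_eq_mul, abs_of_pos (hps τ hτ), mul_comm]
  rw [← setIntegral_congr_fun measurableSet_Ioo heq,
    ← covIntegral hxy hd hc hmono (fun u => (φ y - u) ^ (q - 1) * (u - φ x) ^ (p - 1))]
  exact betaIoo hφxy hp hq


/-- The left proportional fractional integral of `f` of order `α > 0` with respect to `φ`
(with derivative `φ'`), proportion `σ`, based at `a`:
`({}_aI^{α,σ,φ} f)(t) = (1/(σ^α Γ(α))) ∫_a^t e^{((σ-1)/σ)(φ(t)-φ(τ))} (φ(t)-φ(τ))^{α-1} f(τ) φ'(τ) dτ`. -/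
noncomputable def propInt (a α σ : ℝ) (φ φ' : ℝ → ℝ) (f : ℝ → ℂ) (t : ℝ) : ℂ :=
  ((σ ^ α * Real.Gamma α)⁻¹ : ℝ) •
    ∫ τ in a..t,
      (Real.exp ((σ - 1) / σ * (φ t - φ τ)) * (φ t - φ τ) ^ (α - 1) * φ' τ) • f τ

/-- Semigroup property of the left proportional fractional integrals with respect to `φ`:
`{}_aI^{α,σ,φ} ∘ {}_aI^{β,σ,φ} = {}_aI^{α+β,σ,φ}` on `[a,b]`. -/
theorem propInt_semigroup (a b : ℝ) (hab : a < b) (σ : ℝ) (hσ : σ ∈ Set.Ioc (0 : ℝ) 1)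
    (A B : ℝ) (hAa : A < a) (hbB : b < B)
    (φ φ' : ℝ → ℝ)
    (hφ : ∀ t ∈ Set.Ioo A B, HasDerivAt φ (φ' t) t)
    (hφ'cont : ContinuousOn φ' (Set.Ioo A B))
    (hφ'pos : ∀ t ∈ Set.Ioo A B, 0 < φ' t)
    (α β : ℝ) (hα : 0 < α) (hβ : 0 < β)
    (f : ℝ → ℂ) (hf : ContinuousOn f (Set.Icc a b)) :
    ∀ t ∈ Set.Icc a b,
      propInt a α σ φ φ' (propInt a β σ φ φ' f) t = propInt a (α + β) σ φ φ' f t := by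
  obtain ⟨hσ0, hσ1⟩ := hσ
  intro t ht
  rcases eq_or_lt_of_le ht.1 with rfl | hat
  · simp [propInt]
  have htb : t ≤ b := ht.2
  -- basic facts
  have hsub : Icc a b ⊆ Ioo A B := fun x hx => ⟨lt_of_lt_of_le hAa hx.1, lt_of_le_of_lt hx.2 hbB⟩
  have hφcont : ContinuousOn φ (Ioo A B) := fun τ hτ => (hφ τ hτ).continuousAt.continuousWithinAt
  have hmonoAB : StrictMonoOn φ (Ioo A B) := by
    apply strictMonoOn_of_deriv_pos (convex_Ioo A B) hφcont
    intro x hx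
    rw [interior_Ioo] at hx
    rw [(hφ x hx).deriv]
    exact hφ'pos x hx
  have hmono_ab : StrictMonoOn φ (Icc a b) := hmonoAB.mono hsub
  have hc0 : (σ - 1) / σ ≤ 0 :=
    div_nonpos_iff.mpr (Or.inr ⟨by linarith, hσ0.le⟩)
  obtain ⟨Mf, hMf⟩ := isCompact_Icc.exists_bound_of_continuousOn hf
  have hMf0 : 0 ≤ Mf := le_trans (norm_nonneg (f a)) (hMf a ⟨le_refl a, hab.le⟩)
  have hIccsub : ∀ {x y : ℝ}, x ∈ Icc a b → y ∈ Icc a b → Icc x y ⊆ Icc a b :=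
    fun hx hy τ hτ => ⟨hx.1.trans hτ.1, hτ.2.trans hy.2⟩
  have hIoosub : ∀ {x y : ℝ}, x ∈ Icc a b → y ∈ Icc a b → Ioo x y ⊆ Icc a b :=
    fun hx hy τ hτ => ⟨hx.1.trans hτ.1.le, hτ.2.le.trans hy.2⟩
  have hds : ∀ {x y : ℝ}, x ∈ Icc a b → y ∈ Icc a b →
      ∀ τ ∈ Ioo x y, HasDerivWithinAt φ (φ' τ) (Ioo x y) τ :=
    fun hx hy τ hτ => (hφ τ (hsub (hIoosub hx hy hτ))).hasDerivWithinAt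
  have hcs : ∀ {x y : ℝ}, x ∈ Icc a b → y ∈ Icc a b → ContinuousOn φ (Icc x y) :=
    fun hx hy => hφcont.mono (fun τ hτ => hsub (hIccsub hx hy hτ))
  have hms : ∀ {x y : ℝ}, x ∈ Icc a b → y ∈ Icc a b → StrictMonoOn φ (Icc x y) :=
    fun hx hy => hmono_ab.mono (hIccsub hx hy)
  have hpp : ∀ {x y : ℝ}, x ∈ Icc a b → y ∈ Icc a b → ∀ τ ∈ Ioo x y, 0 < φ' τ :=
    fun hx hy τ hτ => hφ'pos τ (hsub (hIoosub hx hy hτ))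
  have htab : t ∈ Icc a b := ht
  have haab : a ∈ Icc a b := ⟨le_refl a, hab.le⟩
  have hmemab : ∀ {τ : ℝ}, τ ∈ Ioo a t → τ ∈ Icc a b := fun hτ => hIoosub haab htab hτ
  have hφ'posab : ∀ {τ : ℝ}, τ ∈ Icc a b → 0 < φ' τ := fun hτ => hφ'pos _ (hsub hτ)
  -- key1 specialization
  have K1 : ∀ {x y : ℝ}, x ∈ Icc a b → y ∈ Icc a b → x < y → ∀ {γ : ℝ}, 0 < γ →
      IntegrableOn (fun τ => (φ y - φ τ) ^ (γ - 1) * φ' τ) (Ioo x y) volume ∧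
      ∫ τ in Ioo x y, (φ y - φ τ) ^ (γ - 1) * φ' τ = (φ y - φ x) ^ γ / γ :=
    by
    intro x y hx hy hxy γ hγ
    exact key1 hxy hγ (hds hx hy) (hcs hx hy) (hms hx hy) (hpp hx hy)
  set μ : Measure ℝ := volume.restrict (Ioo a t) with hμ
  set G : ℝ × ℝ → ℂ := fun q => (pk σ α φ φ' t q.1 * pk σ β φ φ' q.1 q.2) • f q.2 with hGdef
  set F : ℝ × ℝ → ℂ := fun q => ({q : ℝ × ℝ | q.2 ≤ q.1}).indicator G q with hFdef
  have hFslice : ∀ τ : ℝ, (fun s => F (τ, s)) = (Iic τ).indicator (fun s => G (τ, s)) := by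
    intro τ; funext s
    simp only [hFdef, indicator_apply, mem_setOf_eq, mem_Iic]
  have hFslice' : ∀ s : ℝ, (fun τ => F (τ, s)) = (Ici s).indicator (fun τ => G (τ, s)) := by
    intro s; funext τ
    simp only [hFdef, indicator_apply, mem_setOf_eq, mem_Ici]
  -- measurability
  have hGmeas : AEStronglyMeasurable G (μ.prod μ) := by
    have hprod : μ.prod μ = (volume.prod volume).restrict (Ioo a t ×ˢ Ioo a t) :=
      Measure.prod_restrict _ _
    have hdiag : (volume.prod (volume : Measure ℝ)) {q : ℝ × ℝ | q.1 = q.2} = 0 := by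
      have hm : MeasurableSet {q : ℝ × ℝ | q.1 = q.2} :=
        measurableSet_eq_fun measurable_fst measurable_snd
      rw [Measure.prod_apply hm]
      have h0 : ∀ x : ℝ, volume (Prod.mk x ⁻¹' {q : ℝ × ℝ | q.1 = q.2}) = 0 := by
        intro x
        have hpre : (Prod.mk x ⁻¹' {q : ℝ × ℝ | q.1 = q.2}) = {x} := by
          ext y; simp [eq_comm]
        rw [hpre]; exact measure_singleton x
      simp [h0]
    set S' : Set (ℝ × ℝ) := (Ioo a t ×ˢ Ioo a t) \ {q : ℝ × ℝ | q.1 = q.2} with hS'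
    have hS'open : IsOpen S' :=
      (isOpen_Ioo.prod isOpen_Ioo).sdiff (isClosed_eq continuous_fst continuous_snd)
    have hGcont : ContinuousOn G S' := by
      intro q hq
      obtain ⟨⟨hq1, hq2⟩, hqd⟩ := hq
      have h1ab : q.1 ∈ Icc a b := hmemab hq1
      have h2ab : q.2 ∈ Icc a b := hmemab hq2
      apply ContinuousAt.continuousWithinAt
      have hφ1 : ContinuousAt φ q.1 := (hφ _ (hsub h1ab)).continuousAt
      have hφ2 : ContinuousAt φ q.2 := (hφ _ (hsub h2ab)).continuousAt
      have hφ'1 : ContinuousAt φ' q.1 := hφ'cont.continuousAt (isOpen_Ioo.mem_nhds (hsub h1ab))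
      have hφ'2 : ContinuousAt φ' q.2 := hφ'cont.continuousAt (isOpen_Ioo.mem_nhds (hsub h2ab))
      have hf2 : ContinuousAt f q.2 :=
        hf.continuousAt (Icc_mem_nhds hq2.1 (lt_of_lt_of_le hq2.2 htb))
      have c1 : ContinuousAt (fun p : ℝ × ℝ => φ p.1) q := hφ1.comp continuous_fst.continuousAt
      have c2 : ContinuousAt (fun p : ℝ × ℝ => φ p.2) q := hφ2.comp continuous_snd.continuousAt
      have c1' : ContinuousAt (fun p : ℝ × ℝ => φ' p.1) q := hφ'1.comp continuous_fst.continuousAt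
      have c2' : ContinuousAt (fun p : ℝ × ℝ => φ' p.2) q := hφ'2.comp continuous_snd.continuousAt
      have cf : ContinuousAt (fun p : ℝ × ℝ => f p.2) q := hf2.comp continuous_snd.continuousAt
      have b1 : ContinuousAt (fun p : ℝ × ℝ => φ t - φ p.1) q := continuousAt_const.sub c1
      have b1ne : φ t - φ q.1 ≠ 0 := (sub_pos.mpr (hmono_ab h1ab htab hq1.2)).ne'
      have b2 : ContinuousAt (fun p : ℝ × ℝ => φ p.1 - φ p.2) q := c1.sub c2
      have b2ne : φ q.1 - φ q.2 ≠ 0 := sub_ne_zero.mpr (hmono_ab.injOn.ne h1ab h2ab hqd)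
      have e1 : ContinuousAt (fun p : ℝ × ℝ => Real.exp ((σ - 1) / σ * (φ t - φ p.1))) q :=
        Real.continuous_exp.continuousAt.comp (continuousAt_const.mul b1)
      have e2 : ContinuousAt (fun p : ℝ × ℝ => Real.exp ((σ - 1) / σ * (φ p.1 - φ p.2))) q :=
        Real.continuous_exp.continuousAt.comp (continuousAt_const.mul b2)
      have r1 : ContinuousAt (fun p : ℝ × ℝ => (φ t - φ p.1) ^ (α - 1)) q :=
        b1.rpow_const (Or.inl b1ne)
      have r2 : ContinuousAt (fun p : ℝ × ℝ => (φ p.1 - φ p.2) ^ (β - 1)) q :=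
        b2.rpow_const (Or.inl b2ne)
      exact ((((e1.mul r1).mul c1').mul (((e2.mul r2).mul c2'))).smul cf)
    have hmeq : (volume.prod volume).restrict (Ioo a t ×ˢ Ioo a t)
        = (volume.prod volume).restrict S' := by
      apply Measure.restrict_congr_set
      refine (ae_eq_set.mpr ⟨?_, ?_⟩)
      · refine measure_mono_null ?_ hdiag
        intro q hq
        by_contra h
        exact hq.2 ⟨hq.1, h⟩
      · have hempty : S' \ (Ioo a t ×ˢ Ioo a t) = ∅ := diff_eq_empty.mpr diff_subset
        rw [hempty]; simp
    rw [hprod, hmeq]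
    exact hGcont.aestronglyMeasurable hS'open.measurableSet
  have hFmeas : AEStronglyMeasurable F (μ.prod μ) :=
    hGmeas.indicator (measurableSet_le measurable_snd measurable_fst)
  -- integrability of the inner kernel
  have hpkfcont : ∀ (γ : ℝ) (y : ℝ), y ∈ Icc a b →
      ContinuousOn (fun s => pk σ γ φ φ' y s • f s) (Ioo a y) := by
    intro γ y hy s hs
    have hsab : s ∈ Icc a b := ⟨hs.1.le, hs.2.le.trans hy.2⟩
    have hsAB : s ∈ Ioo A B := hsub hsab
    apply ContinuousAt.continuousWithinAt
    have hφs : ContinuousAt φ s := (hφ s hsAB).continuousAt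
    have hφ's : ContinuousAt φ' s := hφ'cont.continuousAt (isOpen_Ioo.mem_nhds hsAB)
    have hfs : ContinuousAt f s :=
      hf.continuousAt (Icc_mem_nhds hs.1 (lt_of_lt_of_le hs.2 hy.2))
    have hbase : ContinuousAt (fun u => φ y - φ u) s := continuousAt_const.sub hφs
    have hlt : φ s < φ y := hms haab hy ⟨hs.1.le, hs.2.le⟩
      (right_mem_Icc.mpr (hs.1.trans hs.2).le) hs.2
    have hbne : φ y - φ s ≠ 0 := (sub_pos.mpr hlt).ne'
    have h1 : ContinuousAt (fun u => Real.exp ((σ - 1) / σ * (φ y - φ u))) s :=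
      Real.continuous_exp.continuousAt.comp (continuousAt_const.mul hbase)
    have h2 : ContinuousAt (fun u => (φ y - φ u) ^ (γ - 1)) s :=
      hbase.rpow_const (Or.inl hbne)
    exact (((h1.mul h2).mul hφ's).smul hfs)
  have inner_int : ∀ τ ∈ Ioo a t,
      IntegrableOn (fun s => pk σ β φ φ' τ s • f s) (Ioo a τ) volume := by
    intro τ hτ
    have hτab : τ ∈ Icc a b := hmemab hτ
    have hbk := (K1 haab hτab hτ.1 hβ).1
    refine Integrable.mono' (hbk.const_mul Mf)
      (((hpkfcont β τ hτab).aestronglyMeasurable measurableSet_Ioo)) ?_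
    filter_upwards [ae_restrict_mem measurableSet_Ioo] with s hs
    have hsab : s ∈ Icc a b := hIoosub haab hτab hs
    have hφle : 0 ≤ φ τ - φ s := sub_nonneg.mpr (hmono_ab.monotoneOn hsab hτab hs.2.le)
    have h1 : pk σ β φ φ' τ s ≤ (φ τ - φ s) ^ (β - 1) * φ' s :=
      pk_le hc0 hφle (hφ'posab hsab).le
    have h0 : 0 ≤ pk σ β φ φ' τ s := pk_nonneg hφle (hφ'posab hsab).le
    rw [norm_smul, Real.norm_eq_abs, abs_of_nonneg h0]
    calc pk σ β φ φ' τ s * ‖f s‖ ≤ ((φ τ - φ s) ^ (β - 1) * φ' s) * Mf := by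
          apply mul_le_mul h1 (hMf s hsab) (norm_nonneg _)
          exact mul_nonneg (Real.rpow_nonneg hφle _) (hφ'posab hsab).le
      _ = Mf * ((φ τ - φ s) ^ (β - 1) * φ' s) := by ring
  have hGint : ∀ τ ∈ Ioo a t, IntegrableOn (fun s => G (τ, s)) (Ioo a τ) volume := by
    intro τ hτ
    have h2 : IntegrableOn (fun s => pk σ α φ φ' t τ • (pk σ β φ φ' τ s • f s))
        (Ioo a τ) volume := (inner_int τ hτ).smul (pk σ α φ φ' t τ)
    exact h2.congr_fun (fun s _ => (mul_smul _ _ _).symm) measurableSet_Ioo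
  -- slice integrals
  have hIic_inter : ∀ {τ : ℝ}, τ ∈ Ioo a t → Iic τ ∩ Ioo a t = Ioc a τ := by
    intro τ hτ; ext s
    exact ⟨fun ⟨h1, h2⟩ => ⟨h2.1, h1⟩, fun h => ⟨h.2, h.1, lt_of_le_of_lt h.2 hτ.2⟩⟩
  have hIci_inter : ∀ {s : ℝ}, s ∈ Ioo a t → Ici s ∩ Ioo a t = Ico s t := by
    intro s hs; ext τ
    exact ⟨fun ⟨h1, h2⟩ => ⟨h1, h2.2⟩, fun h => ⟨h.1, lt_of_lt_of_le hs.1 h.1, h.2⟩⟩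
  have hslicenorm : ∀ τ ∈ Ioo a t,
      ∫ s, ‖F (τ, s)‖ ∂μ = ∫ s in Ioo a τ, ‖G (τ, s)‖ := by
    intro τ hτ
    have : (fun s => ‖F (τ, s)‖) = (Iic τ).indicator (fun s => ‖G (τ, s)‖) := by
      funext s
      rw [congrFun (hFslice τ) s]
      exact norm_indicator_eq_indicator_norm _ _
    calc ∫ s, ‖F (τ, s)‖ ∂μ = ∫ s, (Iic τ).indicator (fun s => ‖G (τ, s)‖) s ∂μ := by rw [this]
      _ = ∫ s in Iic τ, ‖G (τ, s)‖ ∂μ := integral_indicator measurableSet_Iic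
      _ = ∫ s in Iic τ ∩ Ioo a t, ‖G (τ, s)‖ := by
          rw [hμ, Measure.restrict_restrict measurableSet_Iic]
      _ = ∫ s in Ioc a τ, ‖G (τ, s)‖ := by rw [hIic_inter hτ]
      _ = ∫ s in Ioo a τ, ‖G (τ, s)‖ := integral_Ioc_eq_integral_Ioo
  have hsliceval : ∀ τ ∈ Ioo a t,
      ∫ s, F (τ, s) ∂μ = ∫ s in Ioo a τ, G (τ, s) := by
    intro τ hτ
    calc ∫ s, F (τ, s) ∂μ = ∫ s, (Iic τ).indicator (fun s => G (τ, s)) s ∂μ := by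
          rw [← hFslice τ]
      _ = ∫ s in Iic τ, G (τ, s) ∂μ := integral_indicator measurableSet_Iic
      _ = ∫ s in Iic τ ∩ Ioo a t, G (τ, s) := by
          rw [hμ, Measure.restrict_restrict measurableSet_Iic]
      _ = ∫ s in Ioc a τ, G (τ, s) := by rw [hIic_inter hτ]
      _ = ∫ s in Ioo a τ, G (τ, s) := integral_Ioc_eq_integral_Ioo
  -- bound on norm-slice integrals
  have inner_norm_bound : ∀ τ ∈ Ioo a t,
      ∫ s, ‖F (τ, s)‖ ∂μ ≤ (Mf * ((φ b - φ a) ^ β / β)) * ((φ t - φ τ) ^ (α - 1) * φ' τ) := by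
    intro τ hτ
    rw [hslicenorm τ hτ]
    have hτab : τ ∈ Icc a b := hmemab hτ
    have hφtτ : 0 ≤ φ t - φ τ := sub_nonneg.mpr (hmono_ab.monotoneOn hτab htab hτ.2.le)
    have hpkα0 : 0 ≤ pk σ α φ φ' t τ := pk_nonneg hφtτ (hφ'posab hτab).le
    have hXnn : 0 ≤ (φ t - φ τ) ^ (α - 1) * φ' τ :=
      mul_nonneg (Real.rpow_nonneg hφtτ _) (hφ'posab hτab).le
    have hpkαle : pk σ α φ φ' t τ ≤ (φ t - φ τ) ^ (α - 1) * φ' τ :=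
      pk_le hc0 hφtτ (hφ'posab hτab).le
    have hbk := K1 haab hτab hτ.1 hβ
    have hmono1 : ∫ s in Ioo a τ, ‖G (τ, s)‖
        ≤ ∫ s in Ioo a τ, (pk σ α φ φ' t τ * Mf) * ((φ τ - φ s) ^ (β - 1) * φ' s) := by
      apply setIntegral_mono_on ((hGint τ hτ).norm) (hbk.1.const_mul _) measurableSet_Ioo
      intro s hs
      have hsab : s ∈ Icc a b := hIoosub haab hτab hs
      have hφτs : 0 ≤ φ τ - φ s := sub_nonneg.mpr (hmono_ab.monotoneOn hsab hτab hs.2.le)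
      have h0β : 0 ≤ pk σ β φ φ' τ s := pk_nonneg hφτs (hφ'posab hsab).le
      have hleβ : pk σ β φ φ' τ s ≤ (φ τ - φ s) ^ (β - 1) * φ' s :=
        pk_le hc0 hφτs (hφ'posab hsab).le
      have hGnorm : ‖G (τ, s)‖ = pk σ α φ φ' t τ * pk σ β φ φ' τ s * ‖f s‖ := by
        show ‖(pk σ α φ φ' t τ * pk σ β φ φ' τ s) • f s‖ = _
        rw [norm_smul, Real.norm_eq_abs, abs_of_nonneg (mul_nonneg hpkα0 h0β)]
      rw [hGnorm]
      have hYnn : 0 ≤ (φ τ - φ s) ^ (β - 1) * φ' s :=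
        mul_nonneg (Real.rpow_nonneg hφτs _) (hφ'posab hsab).le
      calc pk σ α φ φ' t τ * pk σ β φ φ' τ s * ‖f s‖
          ≤ pk σ α φ φ' t τ * ((φ τ - φ s) ^ (β - 1) * φ' s) * Mf := by
            apply mul_le_mul (mul_le_mul le_rfl hleβ h0β hpkα0) (hMf s hsab) (norm_nonneg _)
            exact mul_nonneg hpkα0 hYnn
        _ = (pk σ α φ φ' t τ * Mf) * ((φ τ - φ s) ^ (β - 1) * φ' s) := by ring
    have hval : ∫ s in Ioo a τ, (pk σ α φ φ' t τ * Mf) * ((φ τ - φ s) ^ (β - 1) * φ' s)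
        = (pk σ α φ φ' t τ * Mf) * ((φ τ - φ a) ^ β / β) := by
      rw [MeasureTheory.integral_const_mul, hbk.2]
    have hrp : (φ τ - φ a) ^ β ≤ (φ b - φ a) ^ β := by
      apply Real.rpow_le_rpow (sub_nonneg.mpr (hmono_ab.monotoneOn haab hτab hτ.1.le)) ?_ hβ.le
      have : φ τ ≤ φ b := hmono_ab.monotoneOn hτab ⟨hab.le, le_refl b⟩ (hτab.2)
      linarith
    calc ∫ s in Ioo a τ, ‖G (τ, s)‖
        ≤ (pk σ α φ φ' t τ * Mf) * ((φ τ - φ a) ^ β / β) := hmono1.trans_eq hval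
      _ ≤ (((φ t - φ τ) ^ (α - 1) * φ' τ) * Mf) * ((φ b - φ a) ^ β / β) := by
          have h2 : (φ τ - φ a) ^ β / β ≤ (φ b - φ a) ^ β / β := by gcongr
          exact mul_le_mul (mul_le_mul hpkαle le_rfl hMf0 hXnn) h2
            (div_nonneg (Real.rpow_nonneg
              (sub_nonneg.mpr (hmono_ab.monotoneOn haab hτab hτ.1.le)) _) hβ.le)
            (mul_nonneg hXnn hMf0)
      _ = (Mf * ((φ b - φ a) ^ β / β)) * ((φ t - φ τ) ^ (α - 1) * φ' τ) := by ring
  have hFint : Integrable F (μ.prod μ) := by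
    rw [integrable_prod_iff hFmeas]
    constructor
    · filter_upwards [ae_restrict_mem measurableSet_Ioo] with τ hτ
      rw [hFslice τ, integrable_indicator_iff measurableSet_Iic]
      have : μ.restrict (Iic τ) = volume.restrict (Ioc a τ) := by
        rw [hμ, Measure.restrict_restrict measurableSet_Iic, hIic_inter hτ]
      rw [IntegrableOn, this, ← Measure.restrict_congr_set Ioo_ae_eq_Ioc]
      exact hGint τ hτ
    · refine Integrable.mono'
        (((K1 haab htab hat hα).1.const_mul (Mf * ((φ b - φ a) ^ β / β))).mono_measure
          (le_refl _))
        (hFmeas.norm.integral_prod_right') ?_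
      filter_upwards [ae_restrict_mem measurableSet_Ioo] with τ hτ
      rw [Real.norm_eq_abs, abs_of_nonneg (integral_nonneg (fun s => norm_nonneg _))]
      exact inner_norm_bound τ hτ
  -- step A
  have stepA : ∀ τ ∈ Ioo a t,
      (∫ s, F (τ, s) ∂μ)
        = pk σ α φ φ' t τ • ∫ s in a..τ, pk σ β φ φ' τ s • f s := by
    intro τ hτ
    rw [hsliceval τ hτ, intervalIntegral.integral_of_le hτ.1.le,
      integral_Ioc_eq_integral_Ioo, ← MeasureTheory.integral_smul]
    exact setIntegral_congr_fun measurableSet_Ioo (fun s _ => mul_smul _ _ _)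
  -- step B
  have stepB : ∀ s ∈ Ioo a t,
      (∫ τ, F (τ, s) ∂μ)
        = ((Real.Gamma α * Real.Gamma β / Real.Gamma (α + β)) * pk σ (α + β) φ φ' t s) • f s := by
    intro s hs
    have hsab : s ∈ Icc a b := hmemab hs
    have hcoeff : ∫ τ in Ioo s t, pk σ α φ φ' t τ * pk σ β φ φ' τ s
        = (Real.exp ((σ - 1) / σ * (φ t - φ s)) * φ' s)
          * ((φ t - φ s) ^ (β + α - 1)
            * (Real.Gamma β * Real.Gamma α / Real.Gamma (β + α))) := by
      have hptw : (fun τ => pk σ α φ φ' t τ * pk σ β φ φ' τ s)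
          = fun τ => (Real.exp ((σ - 1) / σ * (φ t - φ s)) * φ' s)
            * ((φ t - φ τ) ^ (α - 1) * (φ τ - φ s) ^ (β - 1) * φ' τ) :=
        funext fun τ => pk_mul
      rw [hptw, MeasureTheory.integral_const_mul,
        key2 hs.2 hβ hα (hds hsab htab) (hcs hsab htab) (hms hsab htab) (hpp hsab htab)]
    calc ∫ τ, F (τ, s) ∂μ
        = ∫ τ, (Ici s).indicator (fun τ => G (τ, s)) τ ∂μ := by rw [← hFslice' s]
      _ = ∫ τ in Ici s, G (τ, s) ∂μ := integral_indicator measurableSet_Ici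
      _ = ∫ τ in Ici s ∩ Ioo a t, G (τ, s) := by
          rw [hμ, Measure.restrict_restrict measurableSet_Ici]
      _ = ∫ τ in Ico s t, G (τ, s) := by rw [hIci_inter hs]
      _ = ∫ τ in Ioo s t, G (τ, s) := integral_Ico_eq_integral_Ioo
      _ = (∫ τ in Ioo s t, pk σ α φ φ' t τ * pk σ β φ φ' τ s) • f s := by
          rw [← _root_.integral_smul_const]
      _ = ((Real.Gamma α * Real.Gamma β / Real.Gamma (α + β)) * pk σ (α + β) φ φ' t s) • f s := by
          rw [hcoeff]
          congr 1
          rw [show β + α = α + β from add_comm β α, pk]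
          ring
  -- assembly
  have unfold1 : ∀ (γ : ℝ) (g : ℝ → ℂ) (x : ℝ), propInt a γ σ φ φ' g x
      = ((σ ^ γ * Real.Gamma γ)⁻¹ : ℝ) • ∫ τ in a..x, pk σ γ φ φ' x τ • g τ := fun _ _ _ => rfl
  have swap := integral_integral_swap (f := fun τ s => F (τ, s)) (μ := μ) (ν := μ) hFint
  have main : ∫ τ in Ioo a t, (pk σ α φ φ' t τ • ∫ s in a..τ, pk σ β φ φ' τ s • f s)
      = (Real.Gamma α * Real.Gamma β / Real.Gamma (α + β)) •
          ∫ s in Ioo a t, pk σ (α + β) φ φ' t s • f s := by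
    calc ∫ τ in Ioo a t, (pk σ α φ φ' t τ • ∫ s in a..τ, pk σ β φ φ' τ s • f s)
        = ∫ τ, (∫ s, F (τ, s) ∂μ) ∂μ :=
          setIntegral_congr_fun measurableSet_Ioo (fun τ hτ => (stepA τ hτ).symm)
      _ = ∫ s, (∫ τ, F (τ, s) ∂μ) ∂μ := swap
      _ = ∫ s in Ioo a t, ((Real.Gamma α * Real.Gamma β / Real.Gamma (α + β))
            * pk σ (α + β) φ φ' t s) • f s :=
          setIntegral_congr_fun measurableSet_Ioo stepB
      _ = (Real.Gamma α * Real.Gamma β / Real.Gamma (α + β)) •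
            ∫ s in Ioo a t, pk σ (α + β) φ φ' t s • f s := by
          rw [← MeasureTheory.integral_smul]
          exact setIntegral_congr_fun measurableSet_Ioo (fun s _ => mul_smul _ _ _)
  rw [unfold1, unfold1]
  simp only [unfold1]
  have hcomm : (fun τ => pk σ α φ φ' t τ •
      (((σ ^ β * Real.Gamma β)⁻¹ : ℝ) • ∫ s in a..τ, pk σ β φ φ' τ s • f s))
      = fun τ => ((σ ^ β * Real.Gamma β)⁻¹ : ℝ) •
        (pk σ α φ φ' t τ • ∫ s in a..τ, pk σ β φ φ' τ s • f s) :=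
    funext fun τ => smul_comm _ _ _
  rw [hcomm, intervalIntegral.integral_smul, intervalIntegral.integral_of_le hat.le,
    integral_Ioc_eq_integral_Ioo, main,
    intervalIntegral.integral_of_le hat.le, integral_Ioc_eq_integral_Ioo]
  rw [smul_smul, smul_smul]
  congr 1
  have hΓα := Real.Gamma_pos_of_pos hα
  have hΓβ := Real.Gamma_pos_of_pos hβ
  have hΓαβ := Real.Gamma_pos_of_pos (by linarith : (0:ℝ) < α + β)
  have hσα := Real.rpow_pos_of_pos hσ0 α
  have hσβ := Real.rpow_pos_of_pos hσ0 β
  rw [Real.rpow_add hσ0]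
  field_simp
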